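/- Assume additionally that ψ is K-Lipschitz on [1,∞) for some K > 0. Then the normalized moment map Φ : ℝ^d → lp (fun m => EuclideanSpace ℝ (Fin m → Fin d)) 2, Φ(x) = ((λ(x)^m ∏_{j : Fin m} x(i j))/m!)_{m, i}, is well defined (each Φ(x) is square-summable), injective, continuous, and satisfies ‖Φ(x)‖² = ψ(‖φ(x)‖) ≤ C for every x; in particular Φ is a continuous injection of ℝ^d into a bounded subset of the feature space. (Proposition 4.1, item (1).) -/

import Mathlib

open Filter Topology
open scoped ENNReal

namespace Stmt7Aux

lemma summable_aux (t : ℝ) : Summable (fun m : ℕ => t ^ m / (m.factorial : ℝ) ^ 2) := by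
  apply Summable.of_abs
  apply Summable.of_nonneg_of_le (fun m => abs_nonneg _) _ (Real.summable_pow_div_factorial |t|)
  intro m
  have h1 : (0:ℝ) < m.factorial := by exact_mod_cast m.factorial_pos
  have h2 : (1:ℝ) ≤ (m.factorial : ℝ) := by exact_mod_cast m.factorial_pos
  rw [abs_div, abs_pow, abs_pow, abs_of_pos h1]
  exact div_le_div_of_nonneg_left (pow_nonneg (abs_nonneg t) m) h1 (by nlinarith)

noncomputable def Gf (t : ℝ) : ℝ := ∑' m : ℕ, t ^ m / (m.factorial : ℝ) ^ 2

lemma continuous_Gf : Continuous Gf := by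
  rw [continuous_iff_continuousAt]
  intro t
  have hball : t ∈ Metric.ball (0:ℝ) (|t| + 1) := by
    rw [Metric.mem_ball, Real.dist_eq, sub_zero]
    nlinarith [abs_nonneg t]
  have h1 : ContinuousOn Gf (Metric.ball (0:ℝ) (|t| + 1)) := by
    apply continuousOn_tsum (u := fun m => (|t| + 1) ^ m / (m.factorial : ℝ) ^ 2)
    · intro i; fun_prop
    · exact summable_aux _
    · intro n x hx
      rw [Metric.mem_ball, Real.dist_eq, sub_zero] at hx
      have h1 : (0:ℝ) < n.factorial := by exact_mod_cast n.factorial_pos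
      rw [Real.norm_eq_abs, abs_div, abs_pow, abs_pow, abs_of_pos h1]
      gcongr
  exact h1.continuousAt (Metric.isOpen_ball.mem_nhds hball)

lemma strictMonoOn_Gf : StrictMonoOn Gf (Set.Ici 0) := by
  intro a ha b hb hab
  simp only [Set.mem_Ici] at ha hb
  apply Summable.tsum_lt_tsum_of_nonneg (i := 1)
  · intro m; positivity
  · intro m; gcongr
  · simpa [Nat.factorial] using hab
  · exact summable_aux b

lemma norm_sq_eq {ι : Type*} [Fintype ι] (v : EuclideanSpace ℝ ι) : ‖v‖ ^ 2 = ∑ i, v i ^ 2 := by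
  rw [EuclideanSpace.norm_eq, Real.sq_sqrt (by positivity)]
  simp [Real.norm_eq_abs, sq_abs]

lemma inn_self {d : ℕ} (x : EuclideanSpace ℝ (Fin d)) : ∑ k, x k * x k = ‖x‖ ^ 2 := by
  rw [norm_sq_eq]
  exact Finset.sum_congr rfl fun k _ => (pow_two (x k)).symm

lemma level_cross {d : ℕ} (c e : ℝ) (x y : EuclideanSpace ℝ (Fin d)) (m : ℕ) :
    ∑ i : Fin m → Fin d,
      (c ^ m * (∏ j, x (i j)) / (m.factorial : ℝ)) * (e ^ m * (∏ j, y (i j)) / (m.factorial : ℝ))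
      = (c * e * ∑ k, x k * y k) ^ m / (m.factorial : ℝ) ^ 2 := by
  have h1 : (m.factorial : ℝ) ≠ 0 := by exact_mod_cast m.factorial_ne_zero
  calc ∑ i : Fin m → Fin d,
      (c ^ m * (∏ j, x (i j)) / (m.factorial : ℝ)) * (e ^ m * (∏ j, y (i j)) / (m.factorial : ℝ))
      = ∑ i : Fin m → Fin d,
        (c ^ m * e ^ m / (m.factorial : ℝ) ^ 2) * ∏ j, (x (i j) * y (i j)) := by
        apply Finset.sum_congr rfl
        intro i _
        rw [Finset.prod_mul_distrib]
        field_simp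
    _ = (c ^ m * e ^ m / (m.factorial : ℝ) ^ 2) * ∑ i : Fin m → Fin d, ∏ j, (x (i j) * y (i j)) :=
        (Finset.mul_sum _ _ _).symm
    _ = (c ^ m * e ^ m / (m.factorial : ℝ) ^ 2) * (∑ k, x k * y k) ^ m := by
        rw [Fintype.sum_pow (fun k => x k * y k) m]
    _ = (c * e * ∑ k, x k * y k) ^ m / (m.factorial : ℝ) ^ 2 := by
        rw [mul_pow, mul_pow]
        ring

lemma tendsto_of_comp_strictMonoOn {α : Type*} {l : Filter α} {F : ℝ → ℝ}
    (hF : StrictMonoOn F (Set.Ici 0)) {u : α → ℝ} {u₀ : ℝ}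
    (hu : ∀ a, 0 ≤ u a) (hu₀ : 0 ≤ u₀)
    (h : Tendsto (fun a => F (u a)) l (𝓝 (F u₀))) : Tendsto u l (𝓝 u₀) := by
  rw [tendsto_order]
  constructor
  · intro a ha
    rcases lt_or_ge a 0 with h0 | h0
    · exact Eventually.of_forall fun t => lt_of_lt_of_le h0 (hu t)
    · have hFa : F a < F u₀ := hF h0 hu₀ ha
      filter_upwards [h.eventually (eventually_gt_nhds hFa)] with t ht
      by_contra hc
      push_neg at hc
      exact ht.not_ge (hF.monotoneOn (hu t) h0 hc)
  · intro a ha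
    have h0 : (0:ℝ) ≤ a := le_trans hu₀ ha.le
    have hFa : F u₀ < F a := hF hu₀ h0 ha
    filter_upwards [h.eventually (eventually_lt_nhds hFa)] with t ht
    by_contra hc
    push_neg at hc
    exact ht.not_ge (hF.monotoneOn h0 (hu t) hc)

lemma lp_norm_sq {E : ℕ → Type*} [∀ i, NormedAddCommGroup (E i)] (f : lp E 2) :
    ‖f‖ ^ 2 = ∑' m, ‖f m‖ ^ 2 := by
  have h := lp.norm_rpow_eq_tsum (p := 2) (by norm_num) f
  rw [show ((2:ℝ≥0∞)).toReal = ((2:ℕ):ℝ) by norm_num] at h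
  simp only [Real.rpow_natCast] at h
  exact_mod_cast h

lemma coord_le_norm {ι : Type*} [Fintype ι] (v : EuclideanSpace ℝ ι) (i : ι) :
    |v i| ≤ ‖v‖ := by
  rw [EuclideanSpace.norm_eq, ← Real.sqrt_sq_eq_abs]
  apply Real.sqrt_le_sqrt
  have h := Finset.single_le_sum (f := fun j => v j ^ 2)
    (fun j _ => sq_nonneg (v j)) (Finset.mem_univ i)
  simpa [Real.norm_eq_abs, sq_abs] using h

noncomputable def Vmap (d : ℕ) (lam : EuclideanSpace ℝ (Fin d) → ℝ)
    (x : EuclideanSpace ℝ (Fin d)) (m : ℕ) : EuclideanSpace ℝ (Fin m → Fin d) :=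
  WithLp.toLp 2 (fun i => lam x ^ m * (∏ j, x (i j)) / (m.factorial : ℝ))

end Stmt7Aux

open Stmt7Aux in
/-- Proposition 4.1, item (1): the normalized moment map
`Φ(x) = (λ(x)^m x^{⊗m}/m!)_m`, realized coordinatewise on
`lp (fun m => EuclideanSpace ℝ (Fin m → Fin d)) 2`, is well defined,
injective, continuous, and satisfies `‖Φ(x)‖² = ψ(‖φ(x)‖) ≤ C`;
so `Φ` is a continuous injection of `ℝ^d` into a bounded set. -/
theorem stmt_7 (d : ℕ) (hd : 1 ≤ d)
    (ψ : ℝ → ℝ) (hψ1 : ψ 1 = 1) (hψge : ∀ x, 1 ≤ x → 1 ≤ ψ x)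
    (hψle : ∀ x, 1 ≤ x → ψ x ≤ x ^ 2) (hψinj : Set.InjOn ψ (Set.Ici 1))
    (C : ℝ) (hψC : ∀ x, 1 ≤ x → ψ x ≤ C)
    (K : ℝ) (hK : 0 < K)
    (hψK : ∀ x y, 1 ≤ x → 1 ≤ y → |ψ x - ψ y| ≤ K * |x - y|)
    (lam : EuclideanSpace ℝ (Fin d) → ℝ) (hlam0 : ∀ x, 0 < lam x)
    (hlam : ∀ x : EuclideanSpace ℝ (Fin d),
      HasSum (fun m => (lam x * ‖x‖) ^ (2 * m) / (m.factorial : ℝ) ^ 2)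
        (ψ (Real.sqrt (∑' m, ‖x‖ ^ (2 * m) / (m.factorial : ℝ) ^ 2)))) :
    (∀ x : EuclideanSpace ℝ (Fin d),
      Memℓp (fun m => (WithLp.toLp 2 (fun i : Fin m → Fin d =>
        lam x ^ m * (∏ j, x (i j)) / (m.factorial : ℝ)) :
          EuclideanSpace ℝ (Fin m → Fin d))) 2) ∧
    ∃ Φ : EuclideanSpace ℝ (Fin d) → lp (fun m => EuclideanSpace ℝ (Fin m → Fin d)) 2,
      (∀ (x : EuclideanSpace ℝ (Fin d)) (m : ℕ) (i : Fin m → Fin d),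
        Φ x m i = lam x ^ m * (∏ j, x (i j)) / (m.factorial : ℝ)) ∧
      Function.Injective Φ ∧ Continuous Φ ∧
      (∀ x, ‖Φ x‖ ^ 2 = ψ (Real.sqrt (∑' m, ‖x‖ ^ (2 * m) / (m.factorial : ℝ) ^ 2)) ∧
        ‖Φ x‖ ^ 2 ≤ C) := by
  classical
  have hself : ∀ z : EuclideanSpace ℝ (Fin d),
      lam z * lam z * ∑ k, z k * z k = (lam z * ‖z‖) ^ 2 := by
    intro z; rw [inn_self]; ring
  have hlev : ∀ (x : EuclideanSpace ℝ (Fin d)) (m : ℕ),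
      ‖Vmap d lam x m‖ ^ 2
      = ((lam x * ‖x‖) ^ 2) ^ m / (m.factorial : ℝ) ^ 2 := by
    intro x m
    rw [norm_sq_eq]
    have h := level_cross (d := d) (lam x) (lam x) x x m
    rw [hself x] at h
    rw [← h]
    exact Finset.sum_congr rfl fun i _ => pow_two _
  have hSG : ∀ x : EuclideanSpace ℝ (Fin d),
      (∑' m : ℕ, ‖x‖ ^ (2 * m) / (m.factorial : ℝ) ^ 2) = Gf (‖x‖ ^ 2) := by
    intro x
    simp only [Gf]
    exact tsum_congr fun m => by rw [pow_mul]
  have hGμ : ∀ x : EuclideanSpace ℝ (Fin d),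
      Gf ((lam x * ‖x‖) ^ 2) = ψ (Real.sqrt (Gf (‖x‖ ^ 2))) := by
    intro x
    have h := (hlam x).tsum_eq
    rw [hSG x] at h
    rw [← h]
    simp only [Gf]
    exact tsum_congr fun m => by rw [pow_mul]
  have hS0 : ∀ x : EuclideanSpace ℝ (Fin d), 1 ≤ Real.sqrt (Gf (‖x‖ ^ 2)) := by
    intro x
    have hsumm : Summable (fun m : ℕ => (‖x‖ ^ 2) ^ m / (m.factorial : ℝ) ^ 2) :=
      summable_aux _
    have h0 : (1:ℝ) ≤ Gf (‖x‖ ^ 2) := by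
      have h1 := Summable.le_tsum hsumm 0 (fun j _ => by positivity)
      simpa [Gf] using h1
    calc (1:ℝ) = Real.sqrt 1 := Real.sqrt_one.symm
    _ ≤ _ := Real.sqrt_le_sqrt h0
  have hmem : ∀ x : EuclideanSpace ℝ (Fin d),
      Memℓp (fun m => Vmap d lam x m) 2 := by
    intro x
    apply memℓp_gen
    rw [show ((2:ℝ≥0∞)).toReal = ((2:ℕ):ℝ) by norm_num]
    simp only [Real.rpow_natCast]
    exact (summable_congr fun m => hlev x m).mpr (summable_aux _)
  set Φ : EuclideanSpace ℝ (Fin d) → lp (fun m => EuclideanSpace ℝ (Fin m → Fin d)) 2 :=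
    fun x => ⟨fun m => Vmap d lam x m, hmem x⟩ with hΦ
  have hnormsq : ∀ x : EuclideanSpace ℝ (Fin d),
      ‖Φ x‖ ^ 2 = ψ (Real.sqrt (Gf (‖x‖ ^ 2))) := by
    intro x
    rw [lp_norm_sq, ← hGμ x]
    simp only [Gf]
    exact tsum_congr fun m => hlev x m
  have hdiff : ∀ x y : EuclideanSpace ℝ (Fin d),
      ‖Φ y - Φ x‖ ^ 2
      = ψ (Real.sqrt (Gf (‖y‖ ^ 2))) + ψ (Real.sqrt (Gf (‖x‖ ^ 2)))
        - 2 * Gf (lam x * lam y * ∑ k, x k * y k) := by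
    intro x y
    rw [lp_norm_sq]
    have hcoord : ∀ m : ℕ,
        ‖(Φ y - Φ x : lp (fun m => EuclideanSpace ℝ (Fin m → Fin d)) 2) m‖ ^ 2
        = ((lam y * ‖y‖) ^ 2) ^ m / (m.factorial : ℝ) ^ 2
          + ((lam x * ‖x‖) ^ 2) ^ m / (m.factorial : ℝ) ^ 2
          - 2 * ((lam x * lam y * ∑ k, x k * y k) ^ m / (m.factorial : ℝ) ^ 2) := by
      intro m
      rw [norm_sq_eq]
      have hc : ∀ i : Fin m → Fin d,
          (Φ y - Φ x : lp (fun m => EuclideanSpace ℝ (Fin m → Fin d)) 2) m i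
          = (lam y ^ m * (∏ j, y (i j)) / (m.factorial : ℝ))
            - (lam x ^ m * (∏ j, x (i j)) / (m.factorial : ℝ)) := fun i => rfl
      have e1 := level_cross (d := d) (lam y) (lam y) y y m
      have e2 := level_cross (d := d) (lam x) (lam x) x x m
      have e3 := level_cross (d := d) (lam x) (lam y) x y m
      rw [hself y] at e1
      rw [hself x] at e2
      rw [← e1, ← e2, ← e3]
      rw [Finset.mul_sum, ← Finset.sum_add_distrib, ← Finset.sum_sub_distrib]
      apply Finset.sum_congr rfl
      intro i _
      rw [hc i]
      ring
    rw [tsum_congr hcoord]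
    rw [Summable.tsum_sub ((summable_aux _).add (summable_aux _))
      ((summable_aux ((lam x * lam y * ∑ k, x k * y k))).mul_left 2)]
    rw [Summable.tsum_add (summable_aux _) (summable_aux _), tsum_mul_left]
    have g1 : (∑' m : ℕ, ((lam y * ‖y‖) ^ 2) ^ m / (m.factorial : ℝ) ^ 2)
        = Gf ((lam y * ‖y‖) ^ 2) := rfl
    have g2 : (∑' m : ℕ, ((lam x * ‖x‖) ^ 2) ^ m / (m.factorial : ℝ) ^ 2)
        = Gf ((lam x * ‖x‖) ^ 2) := rfl
    have g3 : (∑' m : ℕ, (lam x * lam y * ∑ k, x k * y k) ^ m / (m.factorial : ℝ) ^ 2)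
        = Gf (lam x * lam y * ∑ k, x k * y k) := rfl
    rw [g1, g2, g3, hGμ x, hGμ y]
  refine ⟨?_, Φ, fun x m i => rfl, ?_, ?_, ?_⟩
  · -- well-definedness with the plain pi (sup) norm
    intro x
    apply memℓp_gen
    rw [show ((2:ℝ≥0∞)).toReal = ((2:ℕ):ℝ) by norm_num]
    simp only [Real.rpow_natCast]
    apply Summable.of_nonneg_of_le (fun m => by positivity) _
      ((summable_congr fun m => hlev x m).mpr (summable_aux _))
    intro m
    refine pow_le_pow_left₀ (norm_nonneg _) ?_ 2
    exact le_rfl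
  · -- injectivity
    intro x y h
    have hco : ∀ (m : ℕ) (i : Fin m → Fin d),
        lam x ^ m * (∏ j, x (i j)) / (m.factorial : ℝ)
          = lam y ^ m * (∏ j, y (i j)) / (m.factorial : ℝ) := by
      intro m i
      exact congrArg (fun v : EuclideanSpace ℝ (Fin m → Fin d) => v i) (congrFun (congrArg Subtype.val h) m)
    have hk : ∀ k, lam x * x k = lam y * y k := by
      intro k
      simpa using hco 1 (fun _ => k)
    have hGnonneg : ∀ z : EuclideanSpace ℝ (Fin d), 0 ≤ Gf (‖z‖ ^ 2) := by
      intro z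
      simp only [Gf]
      exact tsum_nonneg fun m => by positivity
    have hne : ψ (Real.sqrt (Gf (‖x‖ ^ 2))) = ψ (Real.sqrt (Gf (‖y‖ ^ 2))) := by
      rw [← hnormsq x, ← hnormsq y, h]
    have h1 : Real.sqrt (Gf (‖x‖ ^ 2)) = Real.sqrt (Gf (‖y‖ ^ 2)) :=
      hψinj (Set.mem_Ici.2 (hS0 x)) (Set.mem_Ici.2 (hS0 y)) hne
    have h2 : Gf (‖x‖ ^ 2) = Gf (‖y‖ ^ 2) := by
      have h3 := congrArg (fun t => t ^ 2) h1
      simpa [Real.sq_sqrt (hGnonneg x), Real.sq_sqrt (hGnonneg y)] using h3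
    have h3 : ‖x‖ ^ 2 = ‖y‖ ^ 2 :=
      strictMonoOn_Gf.injOn (Set.mem_Ici.2 (sq_nonneg _)) (Set.mem_Ici.2 (sq_nonneg _)) h2
    have h4 : ‖x‖ = ‖y‖ := by
      rw [← Real.sqrt_sq (norm_nonneg x), ← Real.sqrt_sq (norm_nonneg y), h3]
    by_cases hx0 : ‖x‖ = 0
    · have hx : x = 0 := norm_eq_zero.1 hx0
      have hy : y = 0 := norm_eq_zero.1 (h4 ▸ hx0)
      rw [hx, hy]
    · have hl2 : lam x ^ 2 * ‖x‖ ^ 2 = lam y ^ 2 * ‖y‖ ^ 2 := by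
        have l1 : ∀ (c : ℝ) (z : EuclideanSpace ℝ (Fin d)),
            (∑ k, (c * z k) * (c * z k)) = c ^ 2 * ‖z‖ ^ 2 := by
          intro c z
          rw [← inn_self z, Finset.mul_sum]
          exact Finset.sum_congr rfl fun k _ => by ring
        rw [← l1 (lam x) x, ← l1 (lam y) y]
        exact Finset.sum_congr rfl fun k _ => by rw [hk k]
      rw [← h3] at hl2
      have hx2 : (0:ℝ) < ‖x‖ ^ 2 := by positivity
      have hl3 : lam x ^ 2 = lam y ^ 2 := mul_right_cancel₀ (ne_of_gt hx2) hl2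
      have hl4 : lam x = lam y := by
        rw [← Real.sqrt_sq (hlam0 x).le, ← Real.sqrt_sq (hlam0 y).le, hl3]
      refine PiLp.ext fun k => ?_
      have := hk k
      rw [hl4] at this
      exact mul_left_cancel₀ (ne_of_gt (hlam0 y)) this
  · -- continuity
    rw [continuous_iff_continuousAt]
    intro x
    have hs : Tendsto (fun y : EuclideanSpace ℝ (Fin d) => Real.sqrt (Gf (‖y‖ ^ 2)))
        (𝓝 x) (𝓝 (Real.sqrt (Gf (‖x‖ ^ 2)))) :=
      (Real.continuous_sqrt.comp (continuous_Gf.comp (continuous_norm.pow 2))).tendsto x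
    have hψs : Tendsto (fun y : EuclideanSpace ℝ (Fin d) => ψ (Real.sqrt (Gf (‖y‖ ^ 2))))
        (𝓝 x) (𝓝 (ψ (Real.sqrt (Gf (‖x‖ ^ 2))))) := by
      rw [tendsto_iff_dist_tendsto_zero]
      apply squeeze_zero (fun y => dist_nonneg)
        (g := fun y => K * |Real.sqrt (Gf (‖y‖ ^ 2)) - Real.sqrt (Gf (‖x‖ ^ 2))|)
      · intro y
        rw [Real.dist_eq]
        exact hψK _ _ (hS0 y) (hS0 x)
      · have h1 : Tendsto (fun y : EuclideanSpace ℝ (Fin d) =>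
            K * |Real.sqrt (Gf (‖y‖ ^ 2)) - Real.sqrt (Gf (‖x‖ ^ 2))|) (𝓝 x)
            (𝓝 (K * |Real.sqrt (Gf (‖x‖ ^ 2)) - Real.sqrt (Gf (‖x‖ ^ 2))|)) :=
          (hs.sub tendsto_const_nhds).abs.const_mul K
        simpa using h1
    have hF : StrictMonoOn (fun t : ℝ => Gf (t ^ 2)) (Set.Ici 0) := by
      intro a ha b hb hab
      simp only [Set.mem_Ici] at ha hb
      exact strictMonoOn_Gf (Set.mem_Ici.2 (sq_nonneg a)) (Set.mem_Ici.2 (sq_nonneg b))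
        (by nlinarith)
    have hμ : Tendsto (fun y : EuclideanSpace ℝ (Fin d) => lam y * ‖y‖) (𝓝 x)
        (𝓝 (lam x * ‖x‖)) := by
      apply tendsto_of_comp_strictMonoOn hF
        (fun y => mul_nonneg (hlam0 y).le (norm_nonneg y))
        (mul_nonneg (hlam0 x).le (norm_nonneg x))
      have he : (fun y : EuclideanSpace ℝ (Fin d) => Gf ((lam y * ‖y‖) ^ 2))
          = fun y => ψ (Real.sqrt (Gf (‖y‖ ^ 2))) := funext fun y => hGμ y
      show Tendsto (fun y : EuclideanSpace ℝ (Fin d) => Gf ((lam y * ‖y‖) ^ 2)) (𝓝 x)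
        (𝓝 (Gf ((lam x * ‖x‖) ^ 2)))
      rw [he, hGμ x]
      exact hψs
    have hA : Tendsto (fun y : EuclideanSpace ℝ (Fin d) => lam x * lam y * ∑ k, x k * y k)
        (𝓝 x) (𝓝 ((lam x * ‖x‖) ^ 2)) := by
      by_cases hx : x = (0 : EuclideanSpace ℝ (Fin d))
      · subst hx
        have he : (fun y : EuclideanSpace ℝ (Fin d) =>
            lam 0 * lam y * ∑ k, (0 : EuclideanSpace ℝ (Fin d)) k * y k)
            = fun _ => (0:ℝ) := by
          funext y
          have : ∀ k : Fin d, (0 : EuclideanSpace ℝ (Fin d)) k = 0 := fun k => rfl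
          simp [this]
        rw [he]
        have h0 : ((lam 0 * ‖(0 : EuclideanSpace ℝ (Fin d))‖) ^ 2) = 0 := by
          simp
        rw [h0]
        exact tendsto_const_nhds
      · have hnx : ‖x‖ ≠ 0 := fun h0 => hx (norm_eq_zero.1 h0)
        have hinner : Tendsto (fun y : EuclideanSpace ℝ (Fin d) => ∑ k, x k * y k)
            (𝓝 x) (𝓝 (∑ k, x k * x k)) := by
          apply tendsto_finset_sum
          intro k _
          exact tendsto_const_nhds.mul ((EuclideanSpace.proj k).continuous.tendsto x)
        have combined : Tendsto (fun y : EuclideanSpace ℝ (Fin d) =>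
            lam x * ((lam y * ‖y‖) / ‖y‖) * ∑ k, x k * y k) (𝓝 x)
            (𝓝 (lam x * ((lam x * ‖x‖) / ‖x‖) * ∑ k, x k * x k)) :=
          (tendsto_const_nhds.mul
            (hμ.div ((continuous_norm (E := EuclideanSpace ℝ (Fin d))).tendsto x) hnx)).mul hinner
        have heq : ∀ᶠ y in 𝓝 x,
            (fun y : EuclideanSpace ℝ (Fin d) =>
              lam x * ((lam y * ‖y‖) / ‖y‖) * ∑ k, x k * y k) y
            = lam x * lam y * ∑ k, x k * y k := by
          filter_upwards [eventually_ne_nhds hx] with y hy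
          rw [mul_div_assoc, div_self (norm_ne_zero_iff.2 hy), mul_one]
        have hv : lam x * ((lam x * ‖x‖) / ‖x‖) * ∑ k, x k * x k = (lam x * ‖x‖) ^ 2 := by
          rw [inn_self, mul_div_assoc, div_self hnx, mul_one]
          ring
        rw [← hv]
        exact Tendsto.congr' heq combined
    have hD : Tendsto (fun y : EuclideanSpace ℝ (Fin d) =>
        ψ (Real.sqrt (Gf (‖y‖ ^ 2))) + ψ (Real.sqrt (Gf (‖x‖ ^ 2)))
          - 2 * Gf (lam x * lam y * ∑ k, x k * y k)) (𝓝 x) (𝓝 0) := by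
      have h1 := (hψs.add (tendsto_const_nhds (x := ψ (Real.sqrt (Gf (‖x‖ ^ 2)))))).sub
        (((continuous_Gf.tendsto _).comp hA).const_mul 2)
      have h0 : ψ (Real.sqrt (Gf (‖x‖ ^ 2))) + ψ (Real.sqrt (Gf (‖x‖ ^ 2)))
          - 2 * Gf ((lam x * ‖x‖) ^ 2) = 0 := by
        rw [hGμ x]; ring
      rw [← h0]
      exact h1
    have hT : Tendsto (fun y => ‖Φ y - Φ x‖) (𝓝 x) (𝓝 0) := by
      have h1 : ∀ y, ‖Φ y - Φ x‖
          = Real.sqrt (ψ (Real.sqrt (Gf (‖y‖ ^ 2))) + ψ (Real.sqrt (Gf (‖x‖ ^ 2)))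
            - 2 * Gf (lam x * lam y * ∑ k, x k * y k)) := by
        intro y
        rw [← hdiff x y, Real.sqrt_sq (norm_nonneg _)]
      have h2 : Tendsto (fun y : EuclideanSpace ℝ (Fin d) =>
          Real.sqrt (ψ (Real.sqrt (Gf (‖y‖ ^ 2))) + ψ (Real.sqrt (Gf (‖x‖ ^ 2)))
            - 2 * Gf (lam x * lam y * ∑ k, x k * y k))) (𝓝 x) (𝓝 0) := by
        have := (Real.continuous_sqrt.tendsto 0).comp hD
        simpa [Function.comp_def] using this
      exact Tendsto.congr (fun y => (h1 y).symm) h2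
    have : Tendsto Φ (𝓝 x) (𝓝 (Φ x)) := by
      rw [tendsto_iff_norm_sub_tendsto_zero]
      exact hT
    exact this
  · -- norm identity and bound
    intro x
    rw [hSG x]
    exact ⟨hnormsq x, (hnormsq x) ▸ hψC _ (hS0 x)⟩
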